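/- For every positive integer k and every finite solvable group G generated by some set of at most k elements, there exists a finite nonempty multiset A of elements of G with |A| ≤ 85·k such that A has detection probability at least 1/10 in G, i.e., for every proper subgroup H of G the number of elements of A (counted with multiplicity) lying in H is at most (9/10)·|A|. -/

import Mathlib

open scoped Classical

/-- `A` has detection probability at least `δ` in `G`. -/
def Detects {G : Type*} [Group G] (A : Multiset G) (δ : ℝ) : Prop :=
  ∀ H : Subgroup G, H ≠ ⊤ →
    ((A.filter (fun a => a ∈ H)).card : ℝ) ≤ (1 - δ) * (Multiset.card A : ℝ)

universe u

-- core numeric fact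
lemma core_num : 4 * 10^170 < 18^153 := by norm_num

lemma numeric (k : ℕ) (hk : 0 < k) :
    Nat.choose (85*k) (9*(85*k)/10 + 1) * 2^k < 2^(9*(85*k)/10 + 1) := by
  set m := 85*k with hm
  set t := 9*m/10 + 1 with ht
  have htm : t ≤ m := by omega
  -- binomial bound : choose m t * 9^t ≤ 10^m
  have h1 : Nat.choose m t * 9^t ≤ 10^m := by
    have hb : (9 + 1)^m = ∑ i ∈ Finset.range (m+1), 9^i * 1^(m-i) * Nat.choose m i :=
      add_pow 9 1 m
    have hmem : t ∈ Finset.range (m+1) := Finset.mem_range.2 (by omega)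
    calc Nat.choose m t * 9^t = 9^t * 1^(m-t) * Nat.choose m t := by ring
    _ ≤ ∑ i ∈ Finset.range (m+1), 9^i * 1^(m-i) * Nat.choose m i :=
        Finset.single_le_sum (f := fun i => 9^i * 1^(m-i) * Nat.choose m i) (fun i _ => Nat.zero_le _) hmem
    _ = 10^m := by rw [← hb]
  -- 10^m * 2^k < 18^t  via squaring
  have h2 : 10^m * 2^k < 18^t := by
    have hsq : (10^m * 2^k)^2 < (18^t)^2 := by
      have e1 : (10^m * 2^k)^2 = (4 * 10^170)^k := by
        rw [hm, show (4:ℕ) = 2^2 from rfl, show (10:ℕ)^170 = 10^(85*2) from rfl]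
        rw [mul_pow, ← pow_mul, ← pow_mul, mul_pow, ← pow_mul, ← pow_mul]
        ring
      have e2 : (4*10^170)^k < (18^153)^k := Nat.pow_lt_pow_left core_num (by omega)
      have e3 : (18^153)^k = 18^(153*k) := by rw [← pow_mul]
      have e4 : 153*k ≤ 2*t := by omega
      calc (10^m*2^k)^2 = (4*10^170)^k := e1
      _ < 18^(153*k) := by rw [← e3]; exact e2
      _ ≤ (18^t)^2 := by rw [← pow_mul]; exact Nat.pow_le_pow_right (by norm_num) (by omega)
    exact lt_of_pow_lt_pow_left₀ 2 (Nat.zero_le _) hsq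
  -- combine
  have h3 : Nat.choose m t * 2^k * 9^t < 2^t * 9^t := by
    calc Nat.choose m t * 2^k * 9^t = (Nat.choose m t * 9^t) * 2^k := by ring
    _ ≤ 10^m * 2^k := Nat.mul_le_mul_right _ h1
    _ < 18^t := h2
    _ = 2^t * 9^t := by rw [show (18:ℕ) = 2*9 from rfl]; exact mul_pow 2 9 t
  exact Nat.lt_of_mul_lt_mul_right h3



-- uniqueness of the N-translate landing in H
lemma translate_unique {G : Type*} [Group G] {N H : Subgroup G} (hb : H ⊓ N = ⊥)
    (a : G) (v w : ↥N) (hv : a * ↑v ∈ H) (hw : a * ↑w ∈ H) : v = w := by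
  have h1 : (↑v : G)⁻¹ * ↑w ∈ H := by
    have := H.mul_mem (H.inv_mem hv) hw
    simpa [mul_assoc] using this
  have h2 : (↑v : G)⁻¹ * ↑w ∈ N := N.mul_mem (N.inv_mem v.2) w.2
  have : (↑v : G)⁻¹ * ↑w ∈ H ⊓ N := ⟨h1, h2⟩
  rw [hb, Subgroup.mem_bot] at this
  have : (↑v : G) = ↑w := by
    have := congrArg (fun x => (v : G) * x) this
    simpa [mul_assoc] using this.symm
  exact Subtype.ext this

lemma translate_exists {G : Type*} [Group G] {N H : Subgroup G} [N.Normal]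
    (hs : H ⊔ N = ⊤) (a : G) : ∃ v : ↥N, a * ↑v ∈ H := by
  have ha : a ∈ (↑(H ⊔ N) : Set G) := by rw [hs]; trivial
  rw [Subgroup.mul_normal] at ha
  obtain ⟨h, hh, n, hn, rfl⟩ := ha
  exact ⟨⟨n⁻¹, N.inv_mem hn⟩, by simpa [mul_assoc] using hh⟩

lemma compl_eq_of_le {G : Type*} [Group G] {C H N : Subgroup G} [N.Normal]
    (hCH : C ≤ H) (hC : C ⊔ N = ⊤) (hH : H ⊓ N = ⊥) : C = H := by
  refine le_antisymm hCH fun h hh => ?_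
  have : h ∈ (↑(C ⊔ N) : Set G) := by rw [hC]; trivial
  rw [Subgroup.mul_normal] at this
  obtain ⟨c, hc, n, hn, hcn⟩ := this
  have hnH : n ∈ H := by
    have : n = c⁻¹ * h := by rw [← hcn]; group
    rw [this]; exact H.mul_mem (H.inv_mem (hCH hc)) hh
  have : n ∈ H ⊓ N := ⟨hnH, hn⟩
  rw [hH, Subgroup.mem_bot] at this
  have hcn' : c * n = h := hcn
  have hhc : h = c := by rw [← hcn', this, mul_one]
  rw [hhc]; exact hc

lemma exists_good {G : Type*} [Group G] [Finite G] (N : Subgroup G) [N.Normal] (hN : N ≠ ⊥)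
    (k m t : ℕ) (g : Fin k → G) (hgen : Subgroup.closure (Set.range g) = ⊤)
    (at_ : Fin m → G) (hts : Nat.choose m t * 2 ^ k < 2 ^ t) (hkt : k ≤ t) (htm : t ≤ m) :
    ∃ w : Fin m → ↥N, ∀ H : Subgroup G, H ⊔ N = ⊤ → H ⊓ N = ⊥ →
      (Finset.univ.filter (fun j => at_ j * ↑(w j) ∈ H)).card < t := by
  haveI : Fintype ↥N := Fintype.ofFinite _
  haveI : Fintype (Subgroup G) := Fintype.ofFinite _
  set q := Fintype.card ↥N with hqdef
  have hq : 2 ≤ q := Fintype.one_lt_card_iff_nontrivial.2 ((Subgroup.nontrivial_iff_ne_bot N).2 hN)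
  set compls : Finset (Subgroup G) :=
    Finset.univ.filter (fun H => H ⊔ N = ⊤ ∧ H ⊓ N = ⊥) with hcompls
  -- number of complements
  have hcc : compls.card ≤ q ^ k := by
    classical
    set Φ : Subgroup G → (Fin k → ↥N) := fun H j =>
      if hH : H ⊔ N = ⊤ then Classical.choose (translate_exists hH (g j)) else 1 with hΦ
    have hrec : ∀ H ∈ compls, H = Subgroup.closure (Set.range fun j => g j * ↑(Φ H j)) := by
      intro H hH
      rw [hcompls, Finset.mem_filter] at hH
      obtain ⟨-, hsup, hinf⟩ := hH
      set C := Subgroup.closure (Set.range fun j => g j * ↑(Φ H j)) with hC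
      have hCH : C ≤ H := by
        rw [hC, Subgroup.closure_le]
        rintro x ⟨j, rfl⟩
        simp only [Φ, dif_pos hsup]
        exact Classical.choose_spec (translate_exists hsup (g j))
      have hCsup : C ⊔ N = ⊤ := by
        rw [eq_top_iff, ← hgen, Subgroup.closure_le]
        rintro x ⟨j, rfl⟩
        have : g j = (g j * ↑(Φ H j)) * (↑(Φ H j) : G)⁻¹ := by group
        rw [this]
        exact Subgroup.mul_mem _
          (le_sup_left (α := Subgroup G) (Subgroup.subset_closure ⟨j, rfl⟩))
          (le_sup_right (α := Subgroup G) (N.inv_mem (Φ H j).2))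
      exact (compl_eq_of_le hCH hCsup hinf).symm
    have hinj : Set.InjOn Φ ↑compls := by
      intro H1 h1 H2 h2 heq
      rw [hrec H1 h1, hrec H2 h2, heq]
    calc compls.card ≤ (Finset.univ : Finset (Fin k → ↥N)).card :=
          Finset.card_le_card_of_injOn Φ (fun _ _ => Finset.mem_univ _) hinj
    _ = q ^ k := by simp [hqdef]
  -- bad sets
  set cnt : (Fin m → ↥N) → Subgroup G → ℕ :=
    fun w H => (Finset.univ.filter (fun j => at_ j * ↑(w j) ∈ H)).card with hcnt
  have hbadcard : ∀ H ∈ compls,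
      (Finset.univ.filter (fun w : Fin m → ↥N => t ≤ cnt w H)).card
        ≤ Nat.choose m t * q ^ (m - t) := by
    intro H hH
    rw [hcompls, Finset.mem_filter] at hH
    obtain ⟨-, hsup, hinf⟩ := hH
    have hsub : (Finset.univ.filter (fun w : Fin m → ↥N => t ≤ cnt w H))
        ⊆ (Finset.powersetCard t Finset.univ).biUnion
          (fun T => Finset.univ.filter (fun w : Fin m → ↥N => ∀ j ∈ T, at_ j * ↑(w j) ∈ H)) := by
      intro w hw
      rw [Finset.mem_filter] at hw
      obtain ⟨T, hTsub, hTcard⟩ := Finset.exists_subset_card_eq hw.2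
      refine Finset.mem_biUnion.2 ⟨T, ?_, ?_⟩
      · exact Finset.mem_powersetCard.2 ⟨Finset.subset_univ _, hTcard⟩
      · refine Finset.mem_filter.2 ⟨Finset.mem_univ _, fun j hj => ?_⟩
        exact (Finset.mem_filter.1 (hTsub hj)).2
    have hcyl : ∀ T ∈ Finset.powersetCard t (Finset.univ : Finset (Fin m)),
        (Finset.univ.filter (fun w : Fin m → ↥N => ∀ j ∈ T, at_ j * ↑(w j) ∈ H)).card
          ≤ q ^ (m - t) := by
      intro T hT
      have hTcard : T.card = t := (Finset.mem_powersetCard.1 hT).2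
      set Z : Finset (Fin m → ↥N) :=
        Fintype.piFinset (fun j => if j ∈ T then ({1} : Finset ↥N) else Finset.univ) with hZ
      have hψ : ∀ w ∈ Finset.univ.filter
            (fun w : Fin m → ↥N => ∀ j ∈ T, at_ j * ↑(w j) ∈ H),
          (fun j => if j ∈ T then (1 : ↥N) else w j) ∈ Z := by
        intro w _
        rw [hZ, Fintype.mem_piFinset]
        intro j
        by_cases hj : j ∈ T <;> simp [hj]
      have hinj : Set.InjOn (fun (w : Fin m → ↥N) (j : Fin m) => if j ∈ T then (1 : ↥N) else w j)
          ↑(Finset.univ.filter (fun w : Fin m → ↥N => ∀ j ∈ T, at_ j * ↑(w j) ∈ H)) := by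
        intro w1 h1 w2 h2 heq
        rw [Finset.coe_filter, Set.mem_setOf_eq] at h1 h2
        funext j
        by_cases hj : j ∈ T
        · exact translate_unique hinf (at_ j) _ _ (h1.2 j hj) (h2.2 j hj)
        · have := congrFun heq j
          simpa [hj] using this
      calc (Finset.univ.filter (fun w : Fin m → ↥N => ∀ j ∈ T, at_ j * ↑(w j) ∈ H)).card
          ≤ Z.card := Finset.card_le_card_of_injOn _ hψ hinj
      _ = ∏ j : Fin m, (if j ∈ T then ({1} : Finset ↥N) else Finset.univ).card := by
          rw [hZ, Fintype.card_piFinset]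
      _ = ∏ j : Fin m, (if j ∈ T then 1 else q) := by
          refine Finset.prod_congr rfl fun j _ => ?_
          by_cases hj : j ∈ T <;> simp [hj, hqdef]
      _ = q ^ (m - t) := by
          rw [Finset.prod_ite, Finset.prod_const, Finset.prod_const, one_pow, one_mul]
          congr 1
          have he : Finset.univ.filter (fun j => ¬ j ∈ T) = Finset.univ \ T := by
            ext j; simp
          rw [he, Finset.card_sdiff_of_subset (Finset.subset_univ _), Finset.card_univ,
            Fintype.card_fin, hTcard]
    calc (Finset.univ.filter (fun w : Fin m → ↥N => t ≤ cnt w H)).card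
        ≤ ((Finset.powersetCard t Finset.univ).biUnion
            (fun T => Finset.univ.filter
              (fun w : Fin m → ↥N => ∀ j ∈ T, at_ j * ↑(w j) ∈ H))).card :=
          Finset.card_le_card hsub
    _ ≤ ∑ T ∈ Finset.powersetCard t Finset.univ,
          (Finset.univ.filter (fun w : Fin m → ↥N => ∀ j ∈ T, at_ j * ↑(w j) ∈ H)).card :=
          Finset.card_biUnion_le
    _ ≤ ∑ T ∈ Finset.powersetCard t Finset.univ, q ^ (m - t) := Finset.sum_le_sum hcyl
    _ = (Finset.powersetCard t (Finset.univ : Finset (Fin m))).card * q ^ (m-t) := by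
          rw [Finset.sum_const, smul_eq_mul]
    _ = Nat.choose m t * q ^ (m - t) := by
          rw [Finset.card_powersetCard, Finset.card_univ, Fintype.card_fin]
  -- union bound
  set B : Finset (Fin m → ↥N) := compls.biUnion
    (fun H => Finset.univ.filter (fun w : Fin m → ↥N => t ≤ cnt w H)) with hB
  have hBcard : B.card < q ^ m := by
    have h1 : B.card ≤ compls.card * (Nat.choose m t * q ^ (m - t)) := by
      calc B.card ≤ ∑ H ∈ compls,
            (Finset.univ.filter (fun w : Fin m → ↥N => t ≤ cnt w H)).card :=
          Finset.card_biUnion_le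
      _ ≤ ∑ _H ∈ compls, Nat.choose m t * q ^ (m - t) := Finset.sum_le_sum hbadcard
      _ = compls.card * (Nat.choose m t * q ^ (m - t)) := by
          rw [Finset.sum_const, smul_eq_mul]
    have hchoose : Nat.choose m t < q ^ (t - k) := by
      have h2 : Nat.choose m t < 2 ^ (t - k) := by
        have : (2:ℕ) ^ t = 2 ^ (t - k) * 2 ^ k := by
          rw [← pow_add, Nat.sub_add_cancel hkt]
        exact Nat.lt_of_mul_lt_mul_right (a := 2^k) (by rw [← this]; exact hts)
      exact lt_of_lt_of_le h2 (Nat.pow_le_pow_left hq _)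
    calc B.card ≤ compls.card * (Nat.choose m t * q ^ (m - t)) := h1
    _ ≤ q ^ k * (Nat.choose m t * q ^ (m - t)) := Nat.mul_le_mul_right _ hcc
    _ < q ^ k * (q ^ (t - k) * q ^ (m - t)) := by
        have hpos : (0:ℕ) < q ^ k := by positivity
        have hlt : Nat.choose m t * q ^ (m - t) < q ^ (t - k) * q ^ (m - t) :=
          mul_lt_mul_of_pos_right hchoose (by positivity)
        exact mul_lt_mul_of_pos_left hlt hpos
    _ = q ^ m := by
        rw [← pow_add, ← pow_add]
        congr 1
        omega
  have hex : ∃ w : Fin m → ↥N, w ∉ B := by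
    by_contra hwB
    push_neg at hwB
    have : (Finset.univ : Finset (Fin m → ↥N)).card ≤ B.card :=
      Finset.card_le_card (fun w _ => hwB w)
    rw [Finset.card_univ] at this
    have : q ^ m ≤ B.card := by simpa [hqdef] using this
    omega
  obtain ⟨w, hw⟩ := hex
  refine ⟨w, fun H hsup hinf => ?_⟩
  by_contra hcount
  push_neg at hcount
  apply hw
  refine Finset.mem_biUnion.2 ⟨H, ?_, ?_⟩
  · rw [hcompls]; exact Finset.mem_filter.2 ⟨Finset.mem_univ _, hsup, hinf⟩
  · exact Finset.mem_filter.2 ⟨Finset.mem_univ _, hcount⟩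




lemma exists_min_normal (G : Type*) [Group G] [Finite G] [Nontrivial G] :
    ∃ N : Subgroup G, N.Normal ∧ N ≠ ⊥ ∧
      ∀ M : Subgroup G, M.Normal → M ≠ ⊥ → M ≤ N → M = N := by
  haveI : Finite (Subgroup G) :=
    Finite.of_injective (fun H : Subgroup G => (H : Set G)) SetLike.coe_injective
  have hfin : ({M : Subgroup G | M.Normal ∧ M ≠ ⊥}).Finite := Set.toFinite _
  have hne : ({M : Subgroup G | M.Normal ∧ M ≠ ⊥}).Nonempty := by
    refine ⟨⊤, ⟨inferInstance, ?_⟩⟩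
    intro h
    obtain ⟨x, hx⟩ := exists_ne (1 : G)
    have : x ∈ (⊤ : Subgroup G) := trivial
    rw [h, Subgroup.mem_bot] at this
    exact hx this
  obtain ⟨N, hN, hmin⟩ := hfin.exists_minimalFor id _ hne
  exact ⟨N, hN.1, hN.2, fun M hM1 hM2 hle => le_antisymm hle (hmin (j := M) ⟨hM1, hM2⟩ hle)⟩

lemma min_normal_abelian {G : Type*} [Group G] [Group.IsSolvable G] {N : Subgroup G}
    (hNorm : N.Normal) (hbot : N ≠ ⊥)
    (hmin : ∀ M : Subgroup G, M.Normal → M ≠ ⊥ → M ≤ N → M = N) :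
    ∀ x ∈ N, ∀ y ∈ N, x * y = y * x := by
  haveI := hNorm
  by_cases hcomm : ⁅N, N⁆ = ⊥
  · intro x hx y hy
    have h := Subgroup.commutator_mem_commutator hx hy
    rw [hcomm, Subgroup.mem_bot] at h
    exact commutatorElement_eq_one_iff_mul_comm.1 h
  · exfalso
    have hle : ⁅N, N⁆ ≤ N := Subgroup.commutator_le_left N N
    haveI hnn : Subgroup.Normal ⁅N, N⁆ := Subgroup.commutator_normal N N
    have heq : ⁅N, N⁆ = N := hmin _ hnn hcomm hle
    have hder : ∀ n, (derivedSeries ↥N n).map N.subtype = N := by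
      intro n
      induction n with
      | zero =>
        rw [derivedSeries_zero, ← MonoidHom.range_eq_map]
        exact N.range_subtype
      | succ n ih =>
        rw [derivedSeries_succ, Subgroup.map_commutator, ih, heq]
    obtain ⟨n, hn⟩ := Group.IsSolvable.solvable (G := ↥N)
    have := hder n
    rw [hn, Subgroup.map_bot] at this
    exact hbot this.symm

lemma inf_normal_of_sup_top {G : Type*} [Group G] {H N : Subgroup G} [hNorm : N.Normal]
    (habel : ∀ x ∈ N, ∀ y ∈ N, x * y = y * x) (hs : H ⊔ N = ⊤) : (H ⊓ N).Normal := by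
  constructor
  intro x hx g
  have hg : g ∈ (↑(H ⊔ N) : Set G) := by rw [hs]; trivial
  rw [Subgroup.mul_normal] at hg
  obtain ⟨h, hh, n, hn, rfl⟩ := hg
  have hnx : n * x * n⁻¹ = x := by
    rw [habel n hn x hx.2]
    group
  have key : (h * n) * x * ((h * n))⁻¹ = h * x * h⁻¹ := by
    have : (h * n) * x * ((h * n))⁻¹ = h * (n * x * n⁻¹) * h⁻¹ := by group
    rw [this, hnx]
  show (h * n) * x * ((h * n))⁻¹ ∈ H ⊓ N
  rw [key]
  exact ⟨H.mul_mem (H.mul_mem hh hx.1) (H.inv_mem hh), hNorm.conj_mem x hx.2 h⟩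

lemma card_filter_map_univ {α : Type*} {m : ℕ} (f : Fin m → α) (p : α → Prop) :
    (Multiset.filter p (Multiset.map f Finset.univ.val)).card
      = (Finset.univ.filter (fun j => p (f j))).card := by
  rw [← Multiset.countP_eq_card_filter, Multiset.countP_map]
  rfl





lemma key (k : ℕ) (hk : 0 < k) : ∀ (n : ℕ) (G : Type u) [Group G] [Finite G] [Group.IsSolvable G],
    Nat.card G ≤ n → (∃ g : Fin k → G, Subgroup.closure (Set.range g) = ⊤) →
    ∃ a : Fin (85 * k) → G,
      ∀ H : Subgroup G, H ≠ ⊤ →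
        (Finset.univ.filter (fun j => a j ∈ H)).card ≤ 9 * (85 * k) / 10 := by
  intro n
  induction n with
  | zero =>
    intro G _ _ _ hcard _
    haveI : Nonempty G := ⟨1⟩
    have := Nat.card_pos (α := G)
    omega
  | succ n IH =>
    intro G _ _ _ hcard hgen
    by_cases hG : Subsingleton G
    · refine ⟨fun _ => 1, fun H hH => absurd ?_ hH⟩
      rw [Subgroup.eq_top_iff']
      intro x
      rw [Subsingleton.elim x 1]
      exact H.one_mem
    · haveI : Nontrivial G := not_subsingleton_iff_nontrivial.1 hG
      obtain ⟨N, hNorm, hNbot, hNmin⟩ := exists_min_normal G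
      haveI := hNorm
      have habel := min_normal_abelian hNorm hNbot hNmin
      obtain ⟨g, hgen⟩ := hgen
      set m := 85 * k with hm
      set t := 9 * m / 10 + 1 with ht
      set π := QuotientGroup.mk' N with hπ
      have hπs : Function.Surjective π := QuotientGroup.mk'_surjective N
      have hq2 : 2 ≤ Nat.card ↥N := N.one_lt_card_iff_ne_bot.2 hNbot
      have hcardq : Nat.card (G ⧸ N) ≤ n := by
        have he := Subgroup.card_eq_card_quotient_mul_card_subgroup N
        haveI : Nonempty (G ⧸ N) := ⟨1⟩
        have h1 := Nat.card_pos (α := G ⧸ N)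
        have h2 : Nat.card (G ⧸ N) * 2 ≤ Nat.card (G ⧸ N) * Nat.card ↥N :=
          Nat.mul_le_mul_left _ hq2
        omega
      have hgenq : ∃ g' : Fin k → G ⧸ N, Subgroup.closure (Set.range g') = ⊤ := by
        refine ⟨fun j => π (g j), ?_⟩
        have hr : (Set.range fun j => π (g j)) = π '' Set.range g := by
          rw [← Set.range_comp]; rfl
        rw [hr, ← MonoidHom.map_closure, hgen, Subgroup.map_top_of_surjective _ hπs]
      obtain ⟨a', hdet'⟩ := IH (G ⧸ N) hcardq hgenq
      choose lift hlift using fun j => hπs (a' j)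
      have hts : Nat.choose m t * 2 ^ k < 2 ^ t := numeric k hk
      have hkt : k ≤ t := by rw [ht, hm]; omega
      have htm : t ≤ m := by rw [ht, hm]; omega
      obtain ⟨w, hw⟩ := exists_good N hNbot k m t g hgen lift hts hkt htm
      refine ⟨fun j => lift j * ↑(w j), ?_⟩
      intro H hH
      show (Finset.univ.filter (fun j => lift j * ↑(w j) ∈ H)).card ≤ 9 * (85 * k) / 10
      by_cases hs : H ⊔ N = ⊤
      · have hinfn := inf_normal_of_sup_top habel hs
        by_cases hb : H ⊓ N = ⊥
        · have hcount := hw H hs hb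
          omega
        · exfalso
          have hinfN : H ⊓ N = N := hNmin _ hinfn hb inf_le_right
          have hNH : N ≤ H := by rw [← hinfN]; exact inf_le_left
          exact hH (by rw [← hs]; exact (sup_eq_left.2 hNH).symm)
      · have hmapne : Subgroup.map π H ≠ ⊤ := by
          intro hmap
          apply hs
          have hcm := congrArg (Subgroup.comap π) hmap
          rw [Subgroup.comap_map_eq, Subgroup.comap_top] at hcm
          rw [hπ, QuotientGroup.ker_mk'] at hcm
          exact hcm
        have hd := hdet' (Subgroup.map π H) hmapne
        have hmono : (Finset.univ.filter (fun j => lift j * ↑(w j) ∈ H)).card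
            ≤ (Finset.univ.filter (fun j => a' j ∈ Subgroup.map π H)).card := by
          apply Finset.card_le_card
          intro j hj
          rw [Finset.mem_filter] at hj ⊢
          refine ⟨hj.1, ?_⟩
          have hπw : π ↑(w j) = 1 := by
            have : (↑(w j) : G) ∈ MonoidHom.ker π := by
              rw [hπ, QuotientGroup.ker_mk']; exact (w j).2
            exact this
          have hπa : π (lift j * ↑(w j)) = a' j := by
            rw [map_mul, hlift j, hπw, mul_one]
          exact hπa ▸ Subgroup.mem_map_of_mem π hj.2
        omega

theorem stmt18 (k : ℕ) (hk : 0 < k) (G : Type*) [Group G] [Finite G] [Group.IsSolvable G]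
    (hgen : ∃ S : Finset G, S.card ≤ k ∧ Subgroup.closure (S : Set G) = ⊤) :
    ∃ A : Multiset G, A ≠ 0 ∧ Multiset.card A ≤ 85 * k ∧ Detects A (1 / 10) := by
  classical
  obtain ⟨S, hScard, hSclos⟩ := hgen
  set l := S.toList with hl
  have hlen : l.length = S.card := Finset.length_toList S
  set g : Fin k → G := fun i => if h : (i : ℕ) < l.length then l.get ⟨i, h⟩ else 1 with hg
  have hrange : (S : Set G) ⊆ Set.range g := by
    intro x hx
    have hxl : x ∈ l := by rw [hl, Finset.mem_toList]; exact hx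
    obtain ⟨i, hig⟩ := List.mem_iff_get.1 hxl
    have hik : (i : ℕ) < k := lt_of_lt_of_le i.2 (by rw [hlen]; exact hScard)
    refine ⟨⟨i, hik⟩, ?_⟩
    rw [hg]
    simp only
    rw [dif_pos (show ((⟨(i : ℕ), hik⟩ : Fin k) : ℕ) < l.length from i.2)]
    simpa using hig
  have hclos : Subgroup.closure (Set.range g) = ⊤ :=
    top_unique (by rw [← hSclos]; exact Subgroup.closure_mono hrange)
  obtain ⟨a, hdet⟩ := key k hk (Nat.card G) G le_rfl ⟨g, hclos⟩
  have hcardA : Multiset.card (Multiset.map a Finset.univ.val) = 85 * k := by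
    rw [Multiset.card_map]
    simpa using Finset.card_fin (85 * k)
  refine ⟨Multiset.map a Finset.univ.val, ?_, ?_, ?_⟩
  · intro h0
    rw [h0] at hcardA
    simp at hcardA
    omega
  · rw [hcardA]
  · intro H hH
    rw [hcardA, card_filter_map_univ a (fun x => x ∈ H)]
    have hle := hdet H hH
    calc ((Finset.univ.filter (fun j => a j ∈ H)).card : ℝ)
        ≤ ((9 * (85 * k) / 10 : ℕ) : ℝ) := Nat.cast_le.2 hle
    _ ≤ ((9 * (85 * k) : ℕ) : ℝ) / 10 := by exact_mod_cast Nat.cast_div_le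
    _ = (1 - 1 / 10) * ((85 * k : ℕ) : ℝ) := by push_cast; ring
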